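/- Let q ≠ 0 and r be real numbers. For every nonnegative integer n, B_n^q(r) = ∑_{k=0}^n (1/(q^k (k+1))) ∑_{j=0}^k (−1)^j C(k,j) (r + jq)^n, where C(k,j) denotes the binomial coefficient. -/

import Mathlib

/-- The falling factorial `(x)_k = x(x-1)⋯(x-k+1)`. -/
noncomputable def fallFac (x : ℝ) (k : ℕ) : ℝ := ∏ i ∈ Finset.range k, (x - i)

lemma fallFac_natCast (j k : ℕ) :
    fallFac (j : ℝ) k = (k.factorial : ℝ) * (j.choose k : ℝ) := by
  have h : fallFac (j : ℝ) k = ((j.descFactorial k : ℕ) : ℝ) := by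
    induction k with
    | zero => simp [fallFac]
    | succ k ih =>
      rw [fallFac, Finset.prod_range_succ, ← fallFac, ih]
      rcases le_or_gt j k with h | h
      · have h1 : j.descFactorial (k + 1) = 0 :=
          Nat.descFactorial_eq_zero_iff_lt.mpr (Nat.lt_succ_of_le h)
        rcases eq_or_lt_of_le h with h | h
        · subst h; simp [h1]
        · have h2 : j.descFactorial k = 0 := Nat.descFactorial_eq_zero_iff_lt.mpr h
          simp [h1, h2]
      · rw [Nat.descFactorial_succ, Nat.cast_mul, Nat.cast_sub h.le]
        ring
  rw [h, Nat.descFactorial_eq_factorial_mul_choose, Nat.cast_mul]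

lemma alt_inner (k i : ℕ) :
    ∑ j ∈ Finset.range (k + 1), (-1 : ℝ) ^ j * (k.choose j : ℝ) * (j.choose i : ℝ)
      = if i = k then (-1 : ℝ) ^ k else 0 := by
  rcases lt_or_ge k i with hik | hik
  · rw [if_neg (by omega)]
    apply Finset.sum_eq_zero
    intro j hj
    simp only [Finset.mem_range] at hj
    rw [Nat.choose_eq_zero_of_lt (n := j) (k := i) (by omega)]
    ring
  · -- i ≤ k
    have hsub : Finset.Ico i (k + 1) ⊆ Finset.range (k + 1) := by
      intro j hj; simp only [Finset.mem_Ico] at hj; simp [hj.2]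
    rw [← Finset.sum_subset hsub (by
      intro j hj hj'
      simp only [Finset.mem_range] at hj
      simp only [Finset.mem_Ico, not_and, not_lt] at hj'
      have hji : j < i := by omega
      rw [Nat.choose_eq_zero_of_lt (n := j) (k := i) hji]
      ring)]
    rw [Finset.sum_Ico_eq_sum_range]
    have hlen : k + 1 - i = (k - i) + 1 := by omega
    rw [hlen]
    have hterm : ∀ m ∈ Finset.range ((k - i) + 1),
        (-1 : ℝ) ^ (i + m) * (k.choose (i + m) : ℝ) * ((i + m).choose i : ℝ)
          = ((-1 : ℝ) ^ i * (k.choose i : ℝ)) *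
            ((-1 : ℝ) ^ m * ((k - i).choose m : ℝ)) := by
      intro m hm
      simp only [Finset.mem_range] at hm
      have h1 : k.choose (i + m) * (i + m).choose i = k.choose i * (k - i).choose (i + m - i) :=
        Nat.choose_mul (by omega)
      have h2 : i + m - i = m := by omega
      rw [h2] at h1
      have : (k.choose (i + m) : ℝ) * ((i + m).choose i : ℝ)
          = (k.choose i : ℝ) * ((k - i).choose m : ℝ) := by
        exact_mod_cast congrArg (Nat.cast (R := ℝ)) h1
      rw [pow_add]
      linear_combination ((-1 : ℝ) ^ i * (-1 : ℝ) ^ m) * this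
    rw [Finset.sum_congr rfl hterm, ← Finset.mul_sum]
    have halt : ∑ m ∈ Finset.range ((k - i) + 1), (-1 : ℝ) ^ m * ((k - i).choose m : ℝ)
        = if k - i = 0 then 1 else 0 := by
      have := Int.alternating_sum_range_choose (n := k - i)
      have := congrArg (fun z : ℤ => (z : ℝ)) this
      push_cast at this
      simpa using this
    rw [halt]
    rcases eq_or_lt_of_le hik with h | h
    · subst h; simp
    · rw [if_neg (by omega), if_neg (by omega)]
      ring

/-- the explicit formula
`B_n^q(r) = ∑_{k=0}^n (1/(q^k (k+1))) ∑_{j=0}^k (−1)^j C(k,j) (r + jq)^n`. -/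
theorem bernoulli_q_explicit (q r : ℝ) (hq : q ≠ 0)
    (W : ℕ → ℕ → ℝ)
    (hW0 : ∀ n k, n < k → W n k = 0)
    (hW : ∀ n : ℕ, ∀ x : ℝ, (q * x + r) ^ n =
      ∑ k ∈ Finset.range (n + 1), q ^ k * W n k * fallFac x k)
    (B : ℕ → ℝ)
    (hB : ∀ n, B n = ∑ k ∈ Finset.range (n + 1),
      (-1 : ℝ) ^ k * ((k.factorial : ℝ) / ((k : ℝ) + 1)) * W n k)
    (n : ℕ) :
    B n = ∑ k ∈ Finset.range (n + 1), (1 / (q ^ k * ((k : ℝ) + 1))) *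
      ∑ j ∈ Finset.range (k + 1),
        (-1 : ℝ) ^ j * (k.choose j : ℝ) * (r + (j : ℝ) * q) ^ n := by
  have key : ∀ k ∈ Finset.range (n + 1),
      ∑ j ∈ Finset.range (k + 1), (-1 : ℝ) ^ j * (k.choose j : ℝ) * (r + (j : ℝ) * q) ^ n
        = (-1 : ℝ) ^ k * q ^ k * (k.factorial : ℝ) * W n k := by
    intro k hk
    simp only [Finset.mem_range] at hk
    have hpow : ∀ j : ℕ, (r + (j : ℝ) * q) ^ n
        = ∑ i ∈ Finset.range (n + 1),
            (q ^ i * W n i * (i.factorial : ℝ)) * (j.choose i : ℝ) := by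
      intro j
      have := hW n (j : ℝ)
      have heq : (r + (j : ℝ) * q) = q * (j : ℝ) + r := by ring
      rw [heq, this]
      apply Finset.sum_congr rfl
      intro i _
      rw [fallFac_natCast]
      ring
    calc ∑ j ∈ Finset.range (k + 1), (-1 : ℝ) ^ j * (k.choose j : ℝ) * (r + (j : ℝ) * q) ^ n
        = ∑ j ∈ Finset.range (k + 1), ∑ i ∈ Finset.range (n + 1),
            (q ^ i * W n i * (i.factorial : ℝ)) *
              ((-1 : ℝ) ^ j * (k.choose j : ℝ) * (j.choose i : ℝ)) := by
          apply Finset.sum_congr rfl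
          intro j _
          rw [hpow j, Finset.mul_sum]
          apply Finset.sum_congr rfl
          intro i _
          ring
      _ = ∑ i ∈ Finset.range (n + 1), (q ^ i * W n i * (i.factorial : ℝ)) *
            ∑ j ∈ Finset.range (k + 1),
              (-1 : ℝ) ^ j * (k.choose j : ℝ) * (j.choose i : ℝ) := by
          rw [Finset.sum_comm]
          apply Finset.sum_congr rfl
          intro i _
          rw [Finset.mul_sum]
      _ = ∑ i ∈ Finset.range (n + 1), (q ^ i * W n i * (i.factorial : ℝ)) *
            (if i = k then (-1 : ℝ) ^ k else 0) := by
          apply Finset.sum_congr rfl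
          intro i _
          rw [alt_inner k i]
      _ = (-1 : ℝ) ^ k * q ^ k * (k.factorial : ℝ) * W n k := by
          rw [Finset.sum_eq_single k]
          · rw [if_pos rfl]; ring
          · intro b _ hb; rw [if_neg hb, mul_zero]
          · intro h; exact absurd (Finset.mem_range.mpr (by omega)) h
  rw [hB n]
  apply Finset.sum_congr rfl
  intro k hk
  rw [key k hk]
  have hk1 : ((k : ℝ) + 1) ≠ 0 := by positivity
  have hqk : (q : ℝ) ^ k ≠ 0 := pow_ne_zero _ hq
  field_simp
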